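/- Let E be an ε-Hermitian A-module, s ∈ End_A(E) semisimple and normal, and A_s the involutive subalgebra generated by s, s^τ, and A. Define E_s := E as an A_s-module, with A_s-valued form ⟨·,·⟩_{E_s} determined by tr_{A_s/k}(a ⟨u,v⟩_{E_s}) = tr_{A/k}(⟨a u, v⟩_E) for all a ∈ A_s, u, v ∈ E. Then such a form exists, is unique, and makes E_s an ε-Hermitian A_s-module (in particular the form is non-degenerate, (ε,τ)-Hermitian symmetric, and A_s-linear in the first variable). -/

import Mathlib

set_option synthInstance.maxHeartbeats 1000000
set_option maxHeartbeats 2000000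

open Polynomial

section Aux
variable {k : Type} [Field k] [CharZero k]

/-- Restriction of scalars as an algebra hom on endomorphism rings. -/
def endRestrict (k A E : Type) [CommSemiring k] [Semiring A] [Algebra k A]
    [AddCommMonoid E] [Module A E] [Module k E] [IsScalarTower k A E] :
    Module.End A E →ₐ[k] Module.End k E where
  toFun f := f.restrictScalars k
  map_one' := rfl
  map_mul' _ _ := rfl
  map_zero' := rfl
  map_add' _ _ := rfl
  commutes' c := rfl

theorem isReduced_of_isSemisimpleRing (S : Type) [CommRing S] [IsSemisimpleRing S] :
    IsReduced S := by
  refine ⟨fun x hx => ?_⟩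
  by_contra hx0
  obtain ⟨e, he, hspan⟩ := IsSemisimpleRing.ideal_eq_span_idempotent (Ideal.span {x})
  have hex : e ∈ Ideal.span {x} := hspan ▸ Ideal.subset_span rfl
  obtain ⟨y, hy⟩ := Ideal.mem_span_singleton'.mp hex
  have hxe : x ∈ Ideal.span ({e} : Set S) := hspan ▸ Ideal.subset_span rfl
  have hne : e ≠ 0 := by
    rintro rfl
    rw [Ideal.span_singleton_eq_bot.mpr rfl, Ideal.mem_bot] at hxe
    exact hx0 hxe
  obtain ⟨m, hm⟩ := hx
  apply hne
  have h1 : e ^ (m + 1) = e := he.pow_succ_eq m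
  have h2 : e ^ (m + 1) = 0 := by
    rw [← hy, mul_pow, pow_succ x m, hm, zero_mul, mul_zero]
  rw [← h1, h2]

theorem trace_nondeg (S : Type) [CommRing S] [Algebra k S]
    [FiniteDimensional k S] [IsSemisimpleRing S] (x : S) (hx : x ≠ 0) :
    ∃ y, Algebra.trace k S (x * y) ≠ 0 := by
  obtain ⟨e, he, hspan⟩ := IsSemisimpleRing.ideal_eq_span_idempotent (Ideal.span {x})
  have hex : e ∈ Ideal.span {x} := hspan ▸ Ideal.subset_span rfl
  obtain ⟨y, hy⟩ := Ideal.mem_span_singleton'.mp hex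
  have hxe : x ∈ Ideal.span ({e} : Set S) := hspan ▸ Ideal.subset_span rfl
  have hne : e ≠ 0 := by
    rintro rfl
    rw [Ideal.span_singleton_eq_bot.mpr rfl, Ideal.mem_bot] at hxe
    exact hx hxe
  refine ⟨y, ?_⟩
  have hxy : x * y = e := by rw [mul_comm]; exact hy
  rw [hxy]
  have hproj : LinearMap.IsProj (LinearMap.range (LinearMap.mulLeft k e))
      (LinearMap.mulLeft k e) := by
    refine ⟨fun u => LinearMap.mem_range_self _ u, ?_⟩
    rintro _ ⟨w, rfl⟩
    show e * (e * w) = e * w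
    rw [← mul_assoc, he]
  have htr : Algebra.trace k S e = LinearMap.trace k S (LinearMap.mulLeft k e) := by
    rw [Algebra.trace_apply]
    congr 1
  rw [htr, hproj.trace]
  have hrange : LinearMap.range (LinearMap.mulLeft k e) ≠ ⊥ := by
    intro hbot
    apply hne
    have : e ∈ LinearMap.range (LinearMap.mulLeft k e) := ⟨1, mul_one e⟩
    rw [hbot, Submodule.mem_bot] at this
    exact this
  have : Module.finrank k (LinearMap.range (LinearMap.mulLeft k e)) ≠ 0 := by
    rw [Ne, Submodule.finrank_eq_zero (R := k)]
    exact hrange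
  exact Nat.cast_ne_zero.mpr this

theorem trace_faithful (S : Type) [CommRing S] [Algebra k S]
    [FiniteDimensional k S] [IsSemisimpleRing S] (x : S)
    (h : ∀ y, Algebra.trace k S (y * x) = 0) : x = 0 := by
  by_contra hx
  obtain ⟨y, hy⟩ := trace_nondeg (k := k) S x hx
  exact hy (by rw [mul_comm]; exact h y)

end Aux

/-- `B` is an `ε`-Hermitian form on the `A`-module `E`, with respect to the involution
`τ` of `A`: it is biadditive, `A`-linear in the first variable, `(ε, τ)`-Hermitian
symmetric, and non-degenerate. -/
def IsHermForm (A : Type) [CommRing A] (τ : A → A) (ε : A)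
    (E : Type) [AddCommGroup E] [Module A E] (B : E → E → A) : Prop :=
  (∀ u u' v, B (u + u') v = B u v + B u' v) ∧
  (∀ u v v', B u (v + v') = B u v + B u v') ∧
  (∀ (a : A) (u v : E), B (a • u) v = a * B u v) ∧
  (∀ u v, B u v = ε * τ (B v u)) ∧
  (∀ u, (∀ v, B u v = 0) → u = 0)

/-- The `ε`-Hermitian `A`-module `(E, B)` is simple: it is nonzero and every
non-degenerate `A`-submodule is `⊥` or `⊤`. -/
def IsSimpleHerm (A : Type) [CommRing A] (τ : A → A) (ε : A)
    (E : Type) [AddCommGroup E] [Module A E] (B : E → E → A) : Prop :=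
  Nontrivial E ∧
    ∀ N : Submodule A E, (∀ u ∈ N, (∀ v ∈ N, B u v = 0) → u = 0) → N = ⊥ ∨ N = ⊤

/-- Harish-Chandra descent of the form: let `E` be an `ε`-Hermitian `A`-module, `adj`
the adjoint involution of `End_A(E)`, `s` a semisimple normal element, and `A_s` the
subalgebra generated by `s`, `adj s` and `A`.  Then there is a unique map
`B_s : E × E → A_s` satisfying `tr_{A_s/k}(a ⟨u,v⟩_{E_s}) = tr_{A/k}(⟨a u, v⟩_E)`, and it
makes `E_s := E` an `ε`-Hermitian `A_s`-module: it is biadditive, `A_s`-linear in the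
first variable, `(ε, adj)`-Hermitian symmetric, and non-degenerate. -/
theorem descent_hermitian_form {k A : Type} [Field k] [CharZero k]
    [CommRing A] [Algebra k A] [FiniteDimensional k A] [IsSemisimpleRing A]
    (τ : A ≃ₐ[k] A) (hτ : ∀ a, τ (τ a) = a)
    (ε : A) (hε : ε = 1 ∨ ε = -1)
    (E : Type) [AddCommGroup E] [Module A E] [Module.Finite A E]
    [Module k E] [IsScalarTower k A E]
    (B : E → E → A) (hherm : IsHermForm A τ ε E B)
    (adj : Module.End A E → Module.End A E)
    (hadj : ∀ (x : Module.End A E) (u v : E), B (x u) v = B u (adj x v))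
    (s : Module.End A E)
    (hss : Module.End.IsSemisimple (s.restrictScalars k))
    (hnormal : s * adj s = adj s * s)
    (As : Subalgebra A (Module.End A E))
    (hAs : As = Algebra.adjoin A ({s, adj s} : Set (Module.End A E)))
    (hstable : ∀ x ∈ As, adj x ∈ As) :
    (∃! Bs : E → E → As, ∀ (a : As) (u v : E),
        LinearMap.trace k As (LinearMap.mulLeft k ((a * Bs u v : As))) = Algebra.trace k A (B ((a : Module.End A E) u) v)) ∧
    (∀ Bs : E → E → As,
      (∀ (a : As) (u v : E),
        LinearMap.trace k As (LinearMap.mulLeft k ((a * Bs u v : As))) = Algebra.trace k A (B ((a : Module.End A E) u) v)) →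
      (∀ u u' v, Bs (u + u') v = Bs u v + Bs u' v) ∧
      (∀ u v v', Bs u (v + v') = Bs u v + Bs u v') ∧
      (∀ (a : As) (u v : E), Bs ((a : Module.End A E) u) v = a * Bs u v) ∧
      (∀ u v : E, ((Bs u v : Module.End A E)) =
        algebraMap A (Module.End A E) ε * adj (Bs v u)) ∧
      (∀ u : E, (∀ v : E, Bs u v = 0) → u = 0)) := by
  obtain ⟨Badd1, Badd2, Bsmul, Bsymm, Bnd1⟩ := hherm
  -- ε and τ facts
  have hτε : τ ε = ε := by rcases hε with rfl | rfl <;> simp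
  have hετε : ∀ c : A, ε * τ (ε * τ c) = c := by
    intro c; rcases hε with rfl | rfl <;> simp [hτ]
  -- basic facts about B
  have B0r : ∀ u, B u 0 = 0 := by
    intro u; have h := Badd2 u 0 0
    rw [add_zero] at h; exact (left_eq_add.mp h)
  have B0l : ∀ v, B 0 v = 0 := by
    intro v; have h := Badd1 0 0 v
    rw [add_zero] at h; exact (left_eq_add.mp h)
  have Bsubr : ∀ u v v', B u (v - v') = B u v - B u v' := by
    intro u v v'
    have h := Badd2 u (v - v') v'
    rw [sub_add_cancel] at h
    linear_combination -h
  have Bnd2 : ∀ v, (∀ u, B u v = 0) → v = 0 := by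
    intro v h
    refine Bnd1 v fun u => ?_
    rw [Bsymm v u, h u, map_zero, mul_zero]
  have eqd : ∀ w w' : E, (∀ u, B u w = B u w') → w = w' := by
    intro w w' h
    have h2 : ∀ u, B u (w - w') = 0 := fun u => by rw [Bsubr, h u, sub_self]
    have := Bnd2 _ h2
    rwa [sub_eq_zero] at this
  have adj_ext : ∀ x y : Module.End A E, (∀ u v, B u (x v) = B u (y v)) → x = y := by
    intro x y h
    exact LinearMap.ext fun v => eqd _ _ fun u => h u v
  have hadj' : ∀ (x : Module.End A E) u v, B (adj x u) v = B u (x v) := by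
    intro x u v
    have : B u (x v) = B (adj x u) v := by
      rw [Bsymm u (x v), hadj x v u, Bsymm v (adj x u), hετε]
    exact this.symm
  have adjadj : ∀ x, adj (adj x) = x := by
    intro x
    refine adj_ext _ _ fun u v => ?_
    rw [← hadj (adj x) u v, hadj' x u v]
  have adj_mul : ∀ x y, adj (x * y) = adj y * adj x := by
    intro x y
    refine adj_ext _ _ fun u v => ?_
    rw [← hadj (x * y) u v]
    show B (x (y u)) v = B u (adj y (adj x v))
    rw [hadj x (y u) v, hadj y u (adj x v)]
  have adj_add : ∀ x y, adj (x + y) = adj x + adj y := by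
    intro x y
    refine adj_ext _ _ fun u v => ?_
    rw [← hadj (x + y) u v, LinearMap.add_apply, LinearMap.add_apply, Badd1, Badd2,
      hadj x u v, hadj y u v]
  have adj_zero : adj 0 = 0 := by
    refine adj_ext _ _ fun u v => ?_
    rw [← hadj 0 u v]
    show B ((0 : E)) v = B u ((0 : Module.End A E) v)
    show B (0 : E) v = B u (0 : E)
    rw [B0l, B0r]
  have BsemiR : ∀ (a : A) u v, B u (a • v) = τ a * B u v := by
    intro a u v
    rw [Bsymm u (a • v), Bsmul a v u, map_mul, Bsymm u v]
    ring
  have adj_algebraMap : ∀ a : A,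
      adj (algebraMap A (Module.End A E) a) = algebraMap A (Module.End A E) (τ a) := by
    intro a
    refine adj_ext _ _ fun u v => ?_
    rw [← hadj (algebraMap A (Module.End A E) a) u v, Module.algebraMap_end_apply,
      Module.algebraMap_end_apply, Bsmul, BsemiR, hτ]
  have adj_smulk : ∀ (c : k) (x : Module.End A E), adj (c • x) = c • adj x := by
    intro c x
    have h1 : c • x = algebraMap A (Module.End A E) (algebraMap k A c) * x := by
      rw [← Algebra.smul_def, algebraMap_smul]
    have h2 : c • adj x = algebraMap A (Module.End A E) (algebraMap k A c) * adj x := by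
      rw [← Algebra.smul_def, algebraMap_smul]
    rw [h1, h2, adj_mul, adj_algebraMap, AlgEquiv.commutes]
    exact (Algebra.commutes _ _).symm
  have adj_pow : ∀ (x : Module.End A E) (n : ℕ), adj (x ^ n) = (adj x) ^ n := by
    intro x n
    induction n with
    | zero =>
      simp only [pow_zero]
      refine adj_ext _ _ fun u v => ?_
      rw [← hadj 1 u v]
      rfl
    | succ n ih =>
      rw [pow_succ, adj_mul, ih, ← pow_succ']
  -- instances
  haveI : Module.Finite k E := Module.Finite.trans A E
  haveI : FiniteDimensional k (Module.End A E) :=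
    FiniteDimensional.of_injective (endRestrict k A E).toLinearMap
      (LinearMap.restrictScalars_injective k)
  haveI : FiniteDimensional k ↥As :=
    FiniteDimensional.of_injective ((Subalgebra.val As).toLinearMap.restrictScalars k)
      Subtype.val_injective
  set ρ : Module.End A E →ₐ[k] Module.End k E := endRestrict k A E with hρ_def
  have hρinj : Function.Injective ρ := LinearMap.restrictScalars_injective k
  -- commutativity of As
  have hAscomm : ∀ x ∈ As, ∀ y ∈ As, x * y = y * x := by
    intro x hx y hy
    rw [hAs] at hx hy
    induction hx, hy using Algebra.adjoin_induction₂ with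
    | mem_mem a b ha hb =>
      rcases ha with rfl | ha <;> rcases hb with rfl | hb
      · rfl
      · rw [Set.mem_singleton_iff] at hb; subst hb; exact hnormal
      · rw [Set.mem_singleton_iff] at ha; subst ha; exact hnormal.symm
      · rw [Set.mem_singleton_iff] at ha hb; subst ha; subst hb; rfl
    | algebraMap_both r₁ r₂ => exact Algebra.commutes r₁ _
    | algebraMap_left r x hx => exact (Algebra.commutes r x)
    | algebraMap_right r x hx => exact (Algebra.commutes r x).symm
    | add_left x y z hx hy hz ih1 ih2 => rw [add_mul, mul_add, ih1, ih2]
    | add_right x y z hx hy hz ih1 ih2 => rw [mul_add, add_mul, ih1, ih2]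
    | mul_left x y z hx hy hz ih1 ih2 => rw [mul_assoc, ih2, ← mul_assoc, ih1, mul_assoc]
    | mul_right x y z hx hy hz ih1 ih2 => rw [← mul_assoc, ih1, mul_assoc, ih2, ← mul_assoc]
  have hcommAs : ∀ x y : ↥As, x * y = y * x := fun x y =>
    Subtype.ext (hAscomm _ x.2 _ y.2)
  letI : CommRing ↥As := { (inferInstance : Ring ↥As) with mul_comm := hcommAs }
  -- every element of As is a semisimple k-endomorphism
  have hsemi : ∀ x : Module.End A E, x ∈ As → Module.End.IsSemisimple (ρ x) := by
    have hmono : (minpoly k (ρ s)).Monic := minpoly.monic (Algebra.IsIntegral.isIntegral _)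
    set m : Polynomial k := minpoly k (ρ s) with hm_def
    have hsf : Squarefree m := hss.minpoly_squarefree
    have hproot : Polynomial.aeval s m = 0 := by
      apply hρinj
      rw [map_zero, ← Polynomial.aeval_algHom_apply]
      exact minpoly.aeval k (ρ s)
    have hadjaeval : ∀ p : Polynomial k, adj (Polynomial.aeval s p) = Polynomial.aeval (adj s) p := by
      intro p
      induction p using Polynomial.induction_on' with
      | add p q hp hq => rw [map_add, adj_add, hp, hq, map_add]
      | monomial n c =>
        rw [Polynomial.aeval_monomial, Polynomial.aeval_monomial,
          ← Algebra.smul_def, ← Algebra.smul_def, adj_smulk, adj_pow]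
    have hadjroot : Polynomial.aeval (adj s) m = 0 := by
      rw [← hadjaeval, hproot, adj_zero]
    set S1 : Type := AdjoinRoot (m.map (algebraMap k A)) with hS1_def
    set S2 : Type := AdjoinRoot (m.map (algebraMap k S1)) with hS2_def
    haveI : Module.Finite A S1 := (AdjoinRoot.powerBasis' (hmono.map _)).finite
    haveI : IsScalarTower k A S1 := .of_algebraMap_eq fun _ => rfl
    haveI : Module.Finite k S1 := Module.Finite.trans A S1
    haveI : IsArtinianRing S1 := IsArtinianRing.of_finite k S1
    haveI : Module.Finite S1 S2 := (AdjoinRoot.powerBasis' (hmono.map _)).finite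
    haveI : IsScalarTower k S1 S2 := .of_algebraMap_eq fun _ => rfl
    haveI : Module.Finite k S2 := Module.Finite.trans S1 S2
    haveI : IsReduced A := isReduced_of_isSemisimpleRing A
    haveI : IsReduced S1 := by
      have hrad : (Ideal.span {m.map (algebraMap k A)}).IsRadical := by
        rw [← isRadical_iff_span_singleton]
        exact ((PerfectField.separable_iff_squarefree.mpr hsf).map
          (f := algebraMap k A)).squarefree.isRadical
      exact (Ideal.isRadical_iff_quotient_reduced _).mp hrad
    haveI : IsReduced S2 := by
      have hrad : (Ideal.span {m.map (algebraMap k S1)}).IsRadical := by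
        rw [← isRadical_iff_span_singleton]
        exact ((PerfectField.separable_iff_squarefree.mpr hsf).map
          (f := algebraMap k S1)).squarefree.isRadical
      exact (Ideal.isRadical_iff_quotient_reduced _).mp hrad
    set ψ₀ : A →ₐ[k] Module.End k E := Algebra.lsmul k k E with hψ₀_def
    have hρalg : ∀ a : A, ρ (algebraMap A (Module.End A E) a) = ψ₀ a := fun a => rfl
    have hcomm0 : ∀ a : A, Commute (ψ₀ a) (ρ s) := by
      intro a
      refine LinearMap.ext fun u => ?_
      show a • (s u) = s (a • u)
      exact (map_smul s a u).symm
    set ψ₁ : Polynomial A →ₐ[k] Module.End k E :=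
      Polynomial.eval₂AlgHom ψ₀ (ρ s) hcomm0 with hψ₁_def
    have hker1 : ∀ p ∈ Ideal.span {m.map (algebraMap k A)}, ψ₁ p = 0 := by
      refine fun p hp => (Ideal.span_singleton_le_iff_mem (RingHom.ker ψ₁.toRingHom)).mpr ?_ hp
      simpa only [RingHom.mem_ker, AlgHom.toRingHom_eq_coe, RingHom.coe_coe, hψ₁_def,
        Polynomial.eval₂AlgHom_apply, Polynomial.eval₂_map,
        AlgHom.comp_algebraMap_of_tower, Polynomial.aeval_def] using minpoly.aeval k (ρ s)
    set Φ₁ : S1 →ₐ[k] Module.End k E := Ideal.Quotient.liftₐ _ ψ₁ hker1 with hΦ₁_def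
    have hΦ₁mk : ∀ p : Polynomial A, Φ₁ (AdjoinRoot.mk _ p) = ψ₁ p := fun p => by
      rfl
    have hcommss : Commute (ρ s) (ρ (adj s)) := by
      have := congrArg ρ hnormal
      simpa only [map_mul, commute_iff_eq] using this
    have hcomm1 : ∀ y : S1, Commute (Φ₁ y) (ρ (adj s)) := by
      rintro ⟨p⟩
      show Commute (Φ₁ (AdjoinRoot.mk _ p)) (ρ (adj s))
      rw [hΦ₁mk]
      refine p.induction_on (fun a => ?_) (fun p q hp hq => by simpa using hp.add_left hq)
        (fun n a h => ?_)
      · have : ψ₁ (Polynomial.C a) = ψ₀ a := by simp [hψ₁_def]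
        rw [this]
        refine LinearMap.ext fun u => ?_
        show a • ((adj s) u) = (adj s) (a • u)
        exact (map_smul (adj s) a u).symm
      · have h2 : ψ₁ (Polynomial.C a * Polynomial.X ^ (n + 1)) =
            ψ₁ (Polynomial.C a * Polynomial.X ^ n) * ρ s := by
          rw [pow_succ, ← mul_assoc, map_mul]
          simp [hψ₁_def]
        rw [h2]
        exact h.mul_left hcommss
    set ψ₂ : Polynomial S1 →ₐ[k] Module.End k E :=
      Polynomial.eval₂AlgHom Φ₁ (ρ (adj s)) hcomm1 with hψ₂_def
    have hker2 : ∀ p ∈ Ideal.span {m.map (algebraMap k S1)}, ψ₂ p = 0 := by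
      refine fun p hp => (Ideal.span_singleton_le_iff_mem (RingHom.ker ψ₂.toRingHom)).mpr ?_ hp
      have : Polynomial.aeval (ρ (adj s)) m = 0 := by
        rw [Polynomial.aeval_algHom_apply, hadjroot, map_zero]
      simpa only [RingHom.mem_ker, AlgHom.toRingHom_eq_coe, RingHom.coe_coe, hψ₂_def,
        Polynomial.eval₂AlgHom_apply, Polynomial.eval₂_map,
        AlgHom.comp_algebraMap_of_tower, Polynomial.aeval_def] using this
    set Φ₂ : S2 →ₐ[k] Module.End k E := Ideal.Quotient.liftₐ _ ψ₂ hker2 with hΦ₂_def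
    have hΦ₂mk : ∀ p : Polynomial S1, Φ₂ (AdjoinRoot.mk _ p) = ψ₂ p := fun p => by
      rfl
    have hrange : ∀ x ∈ As, ρ x ∈ Φ₂.range := by
      intro x hx
      rw [hAs] at hx
      induction hx using Algebra.adjoin_induction with
      | mem z hz =>
        rcases hz with rfl | hz
        · refine ⟨AdjoinRoot.of _ (AdjoinRoot.root _), ?_⟩
          show Φ₂ (AdjoinRoot.mk _ (Polynomial.C (AdjoinRoot.root _))) = ρ z
          rw [hΦ₂mk]
          have h1 : ψ₂ (Polynomial.C (AdjoinRoot.root (m.map (algebraMap k A)))) =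
              Φ₁ (AdjoinRoot.root _) := by simp [hψ₂_def]
          rw [h1]
          show Φ₁ (AdjoinRoot.mk _ Polynomial.X) = ρ z
          rw [hΦ₁mk]
          simp [hψ₁_def]
        · rw [Set.mem_singleton_iff] at hz
          subst hz
          refine ⟨AdjoinRoot.root _, ?_⟩
          show Φ₂ (AdjoinRoot.mk _ Polynomial.X) = ρ (adj s)
          rw [hΦ₂mk]
          simp [hψ₂_def]
      | algebraMap a =>
        refine ⟨AdjoinRoot.of _ (algebraMap A S1 a), ?_⟩
        show Φ₂ (AdjoinRoot.mk _ (Polynomial.C (algebraMap A S1 a))) = _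
        rw [hΦ₂mk]
        have h1 : ψ₂ (Polynomial.C (algebraMap A S1 a)) = Φ₁ (algebraMap A S1 a) := by
          simp [hψ₂_def]
        rw [h1]
        show Φ₁ (AdjoinRoot.mk _ (Polynomial.C a)) = _
        rw [hΦ₁mk]
        have h2 : ψ₁ (Polynomial.C a) = ψ₀ a := by simp [hψ₁_def]
        rw [h2, hρalg]
      | add x y hx hy ihx ihy => rw [map_add]; exact add_mem ihx ihy
      | mul x y hx hy ihx ihy => rw [map_mul]; exact mul_mem ihx ihy
    intro x hx
    obtain ⟨p, hp⟩ := hrange x hx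
    have hp' : Φ₂ p = ρ x := hp
    refine Module.End.isSemisimple_of_squarefree_aeval_eq_zero
      ((minpoly.isRadical k p).squarefree (minpoly.ne_zero (IsIntegral.of_finite k p))) ?_
    rw [← hp', Polynomial.aeval_algHom_apply, minpoly.aeval, map_zero]
  -- As is a commutative semisimple ring
  haveI : IsReduced ↥As := by
    refine ⟨fun x hx => ?_⟩
    have h1 : IsNilpotent ((x : Module.End A E)) := hx.map (Subalgebra.val As)
    have h2 : IsNilpotent (ρ (x : Module.End A E)) := h1.map ρ
    have h3 := Module.End.eq_zero_of_isNilpotent_isSemisimple h2 (hsemi _ x.2)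
    refine Subtype.ext (hρinj ?_)
    rw [h3, ZeroMemClass.coe_zero, map_zero]
  haveI : IsArtinianRing ↥As := IsArtinianRing.of_finite k ↥As
  haveI : IsSemisimpleRing ↥As := IsArtinianRing.isSemisimpleRing_of_isReduced ↥As
  -- trace bridge
  have htr : ∀ z : ↥As, LinearMap.trace k ↥As (LinearMap.mulLeft k z) = Algebra.trace k ↥As z := by
    intro z
    rw [Algebra.trace_apply]
    congr 1
  have hcan : ∀ b b' : ↥As,
      (∀ a : ↥As, Algebra.trace k ↥As (a * b) = Algebra.trace k ↥As (a * b')) → b = b' := by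
    intro b b' h
    have h2 : ∀ y, Algebra.trace k ↥As (y * (b - b')) = 0 := fun y => by
      rw [mul_sub, map_sub, h y, sub_self]
    have h3 := trace_faithful (k := k) ↥As _ h2
    rwa [sub_eq_zero] at h3
  -- the linear functionals
  have Bsmulk : ∀ (c : k) (u v : E), B (c • u) v = c • B u v := by
    intro c u v
    rw [← algebraMap_smul A c u, Bsmul, Algebra.smul_def]
  let Fm : E → E → Module.Dual k ↥As := fun u v =>
    { toFun := fun a => Algebra.trace k A (B ((a : Module.End A E) u) v)
      map_add' := fun a b => by
        show Algebra.trace k A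
            (B ((((a : Module.End A E)) + ((b : Module.End A E))) u) v) = _
        rw [LinearMap.add_apply, Badd1, map_add]
      map_smul' := fun c a => by
        show Algebra.trace k A (B ((c • (a : Module.End A E)) u) v)
            = c • Algebra.trace k A (B ((a : Module.End A E) u) v)
        rw [LinearMap.smul_apply, Bsmulk, map_smul] }
  have hFm : ∀ u v (a : ↥As), Fm u v a = Algebra.trace k A (B ((a : Module.End A E) u) v) :=
    fun u v a => rfl
  -- the trace form on As and its nondegeneracy
  have hTF : (Algebra.traceForm k ↥As).Nondegenerate := by
    refine LinearMap.BilinForm.Nondegenerate.ofSeparatingLeft fun x hx => ?_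
    by_contra h0
    obtain ⟨y, hy⟩ := trace_nondeg (k := k) ↥As x h0
    exact hy (by simpa [Algebra.traceForm_apply] using hx y)
  let Bs0 : E → E → ↥As := fun u v => ((Algebra.traceForm k ↥As).toDual hTF).symm (Fm u v)
  have hBs0 : ∀ u v (a : ↥As),
      Algebra.trace k ↥As (Bs0 u v * a) = Algebra.trace k A (B ((a : Module.End A E) u) v) := by
    intro u v a
    have h1 := LinearEquiv.apply_symm_apply ((Algebra.traceForm k ↥As).toDual hTF) (Fm u v)
    have h2 := DFunLike.congr_fun h1 a
    rw [LinearMap.BilinForm.toDual_def] at h2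
    rw [← hFm u v a, ← h2, Algebra.traceForm_apply]
  have hP0 : ∀ (a : ↥As) (u v : E),
      LinearMap.trace k ↥As (LinearMap.mulLeft k ((a * Bs0 u v : ↥As)))
        = Algebra.trace k A (B ((a : Module.End A E) u) v) := by
    intro a u v
    rw [htr, hcommAs a (Bs0 u v)]
    exact hBs0 u v a
  -- key reformulation of the defining property
  have hkey : ∀ (Bs : E → E → ↥As),
      (∀ (a : ↥As) (u v : E),
        LinearMap.trace k ↥As (LinearMap.mulLeft k ((a * Bs u v : ↥As)))
          = Algebra.trace k A (B ((a : Module.End A E) u) v)) →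
      ∀ (a : ↥As) (u v : E), Algebra.trace k ↥As (a * Bs u v)
          = Algebra.trace k A (B ((a : Module.End A E) u) v) := by
    intro Bs h a u v
    rw [← htr]
    exact h a u v
  -- uniqueness
  have huniq : ∀ Bs' : E → E → ↥As,
      (∀ (a : ↥As) (u v : E),
        LinearMap.trace k ↥As (LinearMap.mulLeft k ((a * Bs' u v : ↥As)))
          = Algebra.trace k A (B ((a : Module.End A E) u) v)) →
      Bs' = Bs0 := by
    intro Bs' h'
    funext u v
    refine hcan _ _ fun a => ?_
    calc Algebra.trace k ↥As (a * Bs' u v)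
        = Algebra.trace k A (B ((a : Module.End A E) u) v) := hkey Bs' h' a u v
      _ = LinearMap.trace k ↥As (LinearMap.mulLeft k (a * Bs0 u v)) := (hP0 a u v).symm
      _ = Algebra.trace k ↥As (a * Bs0 u v) := htr _
  -- ε and the involution on As
  set εs : ↥As := ⟨algebraMap A (Module.End A E) ε, Subalgebra.algebraMap_mem As ε⟩ with hεs_def
  have adjs_mem : ∀ x : ↥As, adj ↑x ∈ As := fun x => hstable _ x.2
  set adjs : ↥As → ↥As := fun x => ⟨adj ↑x, adjs_mem x⟩ with hadjs_def
  have adjs_adjs : ∀ x, adjs (adjs x) = x := fun x => Subtype.ext (adjadj (↑x))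
  have adjs_mul : ∀ x y : ↥As, adjs (x * y) = adjs x * adjs y := by
    intro x y
    refine Subtype.ext ?_
    show adj ((x : Module.End A E) * (y : Module.End A E)) = adj ↑x * adj ↑y
    rw [adj_mul]
    exact hAscomm _ (adjs_mem y) _ (adjs_mem x)
  have adjs_eps : adjs εs = εs := by
    refine Subtype.ext ?_
    show adj (algebraMap A (Module.End A E) ε) = algebraMap A (Module.End A E) ε
    rw [adj_algebraMap, hτε]
  -- trace invariance under adjs
  let eadj : ↥As ≃ₗ[k] ↥As :=
    { toFun := adjs
      invFun := adjs
      map_add' := fun a b => Subtype.ext (by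
        show adj ((a : Module.End A E) + (b : Module.End A E)) = adj ↑a + adj ↑b
        exact adj_add _ _)
      map_smul' := fun c a => Subtype.ext (by
        show adj (c • (a : Module.End A E)) = c • adj ↑a
        exact adj_smulk c _)
      left_inv := adjs_adjs
      right_inv := adjs_adjs }
  have htradjs : ∀ x : ↥As, Algebra.trace k ↥As (adjs x) = Algebra.trace k ↥As x := by
    intro x
    have hconj : (Algebra.lmul k ↥As (adjs x) : ↥As →ₗ[k] ↥As)
        = eadj.conj (Algebra.lmul k ↥As x) := by
      refine LinearMap.ext fun y => ?_
      rw [LinearEquiv.conj_apply]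
      show adjs x * y = adjs (x * adjs y)
      rw [adjs_mul, adjs_adjs]
    rw [Algebra.trace_apply, Algebra.trace_apply, hconj, LinearMap.trace_conj']
  have htrτ : ∀ x : A, Algebra.trace k A (τ x) = Algebra.trace k A x := by
    intro x
    have hconj : (Algebra.lmul k A (τ x) : A →ₗ[k] A)
        = (τ.toLinearEquiv).conj (Algebra.lmul k A x) := by
      refine LinearMap.ext fun y => ?_
      rw [LinearEquiv.conj_apply]
      show τ x * y = τ (x * τ.symm y)
      rw [map_mul, AlgEquiv.apply_symm_apply]
    rw [Algebra.trace_apply, Algebra.trace_apply, hconj, LinearMap.trace_conj']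
  -- Hermitian symmetry in As
  have hherms : ∀ (Bs : E → E → ↥As),
      (∀ (a : ↥As) (u v : E),
        LinearMap.trace k ↥As (LinearMap.mulLeft k ((a * Bs u v : ↥As)))
          = Algebra.trace k A (B ((a : Module.End A E) u) v)) →
      ∀ u v, Bs u v = εs * adjs (Bs v u) := by
    intro Bs h u v
    refine hcan _ _ fun a => ?_
    have hL : Algebra.trace k ↥As (a * Bs u v)
        = Algebra.trace k A (ε * τ (B (adj ↑a v) u)) := by
      rw [hkey Bs h a u v]
      congr 1
      rw [hadj (↑a) u v]
      exact Bsymm u (adj ↑a v)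
    have hR : Algebra.trace k ↥As (a * (εs * adjs (Bs v u)))
        = Algebra.trace k A (ε * B (adj ↑a v) u) := by
      have h1 : a * (εs * adjs (Bs v u)) = adjs ((adjs a * εs) * Bs v u) := by
        rw [adjs_mul, adjs_mul, adjs_adjs, adjs_eps, mul_assoc]
      rw [h1, htradjs, hkey Bs h (adjs a * εs) v u]
      congr 1
      have h2 : ((adjs a * εs : ↥As) : Module.End A E) v = ε • (adj ↑a v) := by
        show (adj ↑a * algebraMap A (Module.End A E) ε) v = ε • (adj ↑a v)
        rw [Module.End.mul_apply, Module.algebraMap_end_apply, map_smul]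
      rw [h2, Bsmul]
    rw [hL, hR, ← htrτ (ε * B (adj ↑a v) u), map_mul τ ε (B (adj ↑a v) u), hτε]
  -- nondegeneracy
  have hnd : ∀ (Bs : E → E → ↥As),
      (∀ (a : ↥As) (u v : E),
        LinearMap.trace k ↥As (LinearMap.mulLeft k ((a * Bs u v : ↥As)))
          = Algebra.trace k A (B ((a : Module.End A E) u) v)) →
      ∀ u : E, (∀ v : E, Bs u v = 0) → u = 0 := by
    intro Bs h u hu
    refine Bnd1 u fun v => ?_
    refine trace_faithful (k := k) A _ (fun c => ?_)
    have h1 := hkey Bs h ⟨algebraMap A (Module.End A E) c, Subalgebra.algebraMap_mem As c⟩ u v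
    rw [hu v, mul_zero, map_zero] at h1
    have h3 : B (((⟨algebraMap A (Module.End A E) c, Subalgebra.algebraMap_mem As c⟩ : ↥As)
        : Module.End A E) u) v = c * B u v := by
      show B ((algebraMap A (Module.End A E) c) u) v = c * B u v
      rw [Module.algebraMap_end_apply, Bsmul]
    rw [h3] at h1
    exact h1.symm
  -- assembly
  refine ⟨⟨Bs0, hP0, fun Bs' h' => huniq Bs' h'⟩, fun Bs h => ⟨?_, ?_, ?_, ?_, hnd Bs h⟩⟩
  · intro u u' v
    refine hcan _ _ fun a => ?_
    have e1 : (a : Module.End A E) (u + u')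
        = (a : Module.End A E) u + (a : Module.End A E) u' := map_add _ _ _
    calc Algebra.trace k ↥As (a * Bs (u + u') v)
        = Algebra.trace k A (B ((a : Module.End A E) (u + u')) v) := hkey Bs h a (u + u') v
      _ = Algebra.trace k A (B ((a : Module.End A E) u) v)
          + Algebra.trace k A (B ((a : Module.End A E) u') v) := by rw [e1, Badd1, map_add]
      _ = Algebra.trace k ↥As (a * Bs u v) + Algebra.trace k ↥As (a * Bs u' v) := by
            rw [hkey Bs h a u v, hkey Bs h a u' v]
      _ = Algebra.trace k ↥As (a * (Bs u v + Bs u' v)) := by rw [← map_add, mul_add]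
  · intro u v v'
    refine hcan _ _ fun a => ?_
    calc Algebra.trace k ↥As (a * Bs u (v + v'))
        = Algebra.trace k A (B ((a : Module.End A E) u) (v + v')) := hkey Bs h a u (v + v')
      _ = Algebra.trace k A (B ((a : Module.End A E) u) v)
          + Algebra.trace k A (B ((a : Module.End A E) u) v') := by rw [Badd2, map_add]
      _ = Algebra.trace k ↥As (a * Bs u v) + Algebra.trace k ↥As (a * Bs u v') := by
            rw [hkey Bs h a u v, hkey Bs h a u v']
      _ = Algebra.trace k ↥As (a * (Bs u v + Bs u v')) := by rw [← map_add, mul_add]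
  · intro x u v
    refine hcan _ _ fun a => ?_
    have e1 : (a : Module.End A E) ((x : Module.End A E) u)
        = ((a * x : ↥As) : Module.End A E) u := rfl
    calc Algebra.trace k ↥As (a * Bs ((x : Module.End A E) u) v)
        = Algebra.trace k A (B (((a * x : ↥As) : Module.End A E) u) v) := by
            rw [hkey Bs h a _ v, e1]
      _ = Algebra.trace k ↥As ((a * x) * Bs u v) := (hkey Bs h (a * x) u v).symm
      _ = Algebra.trace k ↥As (a * (x * Bs u v)) := by rw [mul_assoc]
  · intro u v
    have h2 := congrArg (Subtype.val) (hherms Bs h u v)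
    exact h2.trans rfl
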